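/- Let V_1, …, V_m ∈ M_n satisfy Tr(ρ^{-1} V_r* V_q) = δ² δ_{rq} for all r, q, where ρ is a positive invertible matrix with Tr(ρ^{-1}) = δ². Then the completely positive map A(x) = Σ_r V_r x V_r* on M_n satisfies the Schur-idempotence relation m(A ⊗ A)m* = δ² A, i.e. A is a quantum adjacency operator for the δ-form ψ = Tr(ρ ·). -/

import Mathlib

open scoped TensorProduct ComplexOrder
open Matrix

/-- The state `ψ = Tr(ρ ·)` on `M_n` as a linear functional. -/
noncomputable def psi1 {n : ℕ} (ρ : Matrix (Fin n) (Fin n) ℂ) :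
    Matrix (Fin n) (Fin n) ℂ →ₗ[ℂ] ℂ where
  toFun X := (ρ * X).trace
  map_add' x y := by simp [mul_add]
  map_smul' c x := by simp [mul_smul_comm]

/-- The GNS inner product on `M_n ⊗ M_n` paired against the pure tensor `x ⊗ y` in the first
(conjugated) slot. -/
noncomputable def pair1 {n : ℕ} (ρ x y : Matrix (Fin n) (Fin n) ℂ) :
    (Matrix (Fin n) (Fin n) ℂ ⊗[ℂ] Matrix (Fin n) (Fin n) ℂ) →ₗ[ℂ] ℂ :=
  TensorProduct.lift
    (LinearMap.mk₂ ℂ (fun c e => psi1 ρ (star x * c) * psi1 ρ (star y * e))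
      (fun c c' e => by simp [mul_add, map_add, add_mul])
      (fun s c e => by simp [mul_smul_comm, _root_.map_smul, smul_eq_mul]; ring)
      (fun c e e' => by simp [mul_add, map_add])
      (fun s c e => by simp [mul_smul_comm, _root_.map_smul, smul_eq_mul]; ring))

/-- The completely positive map `A(x) = Σ_r V_r x V_r*` as a linear map on `M_n`. -/
noncomputable def krausMap {n m : ℕ} (V : Fin m → Matrix (Fin n) (Fin n) ℂ) :
    Matrix (Fin n) (Fin n) ℂ →ₗ[ℂ] Matrix (Fin n) (Fin n) ℂ where
  toFun x := ∑ r, V r * x * (V r)ᴴ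
  map_add' x y := by simp [mul_add, add_mul, Finset.sum_add_distrib]
  map_smul' c x := by simp [mul_smul_comm, smul_mul_assoc, Finset.smul_sum]

section Aux
variable {n : ℕ}

lemma pair1_tmul (ρ x y c e : Matrix (Fin n) (Fin n) ℂ) :
    pair1 ρ x y (c ⊗ₜ[ℂ] e) = (ρ * (xᴴ * c)).trace * (ρ * (yᴴ * e)).trace := by
  simp [pair1, psi1, Matrix.star_eq_conjTranspose]

-- std basis of matrices, coord extraction
lemma coord_eq (ρ : Matrix (Fin n) (Fin n) ℂ) (hρ : ρ.PosDef) (a b c d : Fin n) :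
    pair1 ρ (Matrix.single a b 1 * ρ⁻¹) (Matrix.single c d 1 * ρ⁻¹) =
      ((Matrix.stdBasis ℂ (Fin n) (Fin n)).tensorProduct
        (Matrix.stdBasis ℂ (Fin n) (Fin n))).coord ((a, b), (c, d)) := by
  have hinv : ρ⁻¹ᴴ = ρ⁻¹ := hρ.1.inv.eq
  have hmul : ρ * ρ⁻¹ = 1 := Matrix.mul_nonsing_inv ρ (isUnit_iff_ne_zero.mpr hρ.det_pos.ne')
  apply ((Matrix.stdBasis ℂ (Fin n) (Fin n)).tensorProduct
        (Matrix.stdBasis ℂ (Fin n) (Fin n))).ext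
  rintro ⟨⟨i, j⟩, ⟨k, l⟩⟩
  rw [Module.Basis.tensorProduct_apply, Module.Basis.coord_apply, Module.Basis.tensorProduct_repr_tmul_apply,
    Module.Basis.repr_self, Module.Basis.repr_self]
  rw [Matrix.stdBasis_eq_single, Matrix.stdBasis_eq_single, pair1_tmul]
  have key : ∀ p q r s : Fin n,
      (ρ * ((Matrix.single p q 1 * ρ⁻¹)ᴴ * Matrix.single r s 1)).trace
        = if (r, s) = (p, q) then 1 else 0 := by
    intro p q r s
    have hct : (Matrix.single p q (1:ℂ))ᴴ = Matrix.single q p 1 := by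
      ext u v; simp [Matrix.conjTranspose_apply, Matrix.single, and_comm]
    rw [Matrix.conjTranspose_mul, hinv, hct]
    rw [show ρ * (ρ⁻¹ * Matrix.single q p (1:ℂ) * Matrix.single r s 1)
        = (ρ * ρ⁻¹) * (Matrix.single q p (1:ℂ) * Matrix.single r s 1) by simp [mul_assoc]]
    rw [hmul, one_mul]
    simp only [Matrix.trace, Matrix.diag, Matrix.mul_apply, Matrix.single,
      Matrix.of_apply, ite_and, Prod.mk.injEq, mul_ite, mul_one, mul_zero]
    by_cases hr : r = p <;> by_cases hs : s = q <;>
      simp [hr, hs, Finset.sum_ite_eq]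
    · exact fun h => hs h.symm
    · exact fun h => hr h.symm
    · exact fun _ h => hr h.symm
  rw [key, key]
  simp only [Finsupp.single_apply, Prod.ext_iff, Prod.mk.injEq]
  by_cases h1 : i = a <;> by_cases h2 : j = b <;> by_cases h3 : k = c <;> by_cases h4 : l = d <;>
    simp [h1, h2, h3, h4, eq_comm]

lemma htr (M : Matrix (Fin n) (Fin n) ℂ) (i k : Fin n) :
    (M * Matrix.single i k (1:ℂ)).trace = M k i := by
  simp [Matrix.trace, Matrix.diag, Matrix.mul_apply, Matrix.single, ite_and]

lemma sumk (M : Matrix (Fin n) (Fin n) ℂ) (i j : Fin n) :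
    ∑ k, Matrix.single i k (1:ℂ) * M * Matrix.single k j (1:ℂ)
      = M.trace • Matrix.single i j (1:ℂ) := by
  ext a b
  simp only [Finset.sum_apply, Matrix.sum_apply, Matrix.mul_apply, Matrix.single,
    Matrix.of_apply, Matrix.smul_apply, Matrix.trace, Matrix.diag, smul_eq_mul]
  simp [ite_and, Finset.mul_sum, Finset.sum_mul]
  by_cases hi : i = a <;> by_cases hj : j = b <;> simp [hi, hj]

lemma pairT (ρ : Matrix (Fin n) (Fin n) ℂ) (hρ : ρ.PosDef)
    (z x y : Matrix (Fin n) (Fin n) ℂ) :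
    pair1 ρ x y (∑ i, ∑ j, ∑ k, z i j • ((Matrix.single i k 1 * ρ⁻¹) ⊗ₜ[ℂ] Matrix.single k j 1))
      = psi1 ρ (star (x * y) * z) := by
  have hmul' : ρ⁻¹ * ρ = 1 := Matrix.nonsing_inv_mul ρ (isUnit_iff_ne_zero.mpr hρ.det_pos.ne')
  have h1 : ∀ i k : Fin n, (ρ * (xᴴ * (Matrix.single i k 1 * ρ⁻¹))).trace = xᴴ k i := by
    intro i k
    rw [show ρ * (xᴴ * (Matrix.single i k 1 * ρ⁻¹))
        = (ρ * xᴴ * Matrix.single i k 1) * ρ⁻¹ by simp [mul_assoc]]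
    rw [Matrix.trace_mul_comm, ← mul_assoc, ← mul_assoc, hmul', one_mul, htr]
  simp only [map_sum, _root_.map_smul, pair1_tmul, smul_eq_mul]
  simp only [h1]
  simp only [← mul_assoc]
  simp only [htr]
  simp only [psi1, Matrix.star_eq_conjTranspose, Matrix.conjTranspose_mul, LinearMap.coe_mk,
    AddHom.coe_mk]
  simp only [← mul_assoc]
  simp only [Matrix.trace, Matrix.diag, Matrix.mul_apply, Finset.mul_sum, Finset.sum_mul]
  rw [Finset.sum_comm]
  apply Finset.sum_congr rfl; intro j _
  apply Finset.sum_congr rfl; intro i _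
  apply Finset.sum_congr rfl; intro k _
  apply Finset.sum_congr rfl; intro t _
  ring

end Aux

/-- if `V_1,…,V_m ∈ M_n` satisfy `Tr(ρ⁻¹ V_r* V_q) = δ² δ_{rq}` where `ρ` is
positive invertible with `Tr(ρ⁻¹) = δ²` (so `ψ = Tr(ρ ·)` is a `δ`-form), then the
completely positive map `A(x) = Σ_r V_r x V_r*` satisfies `m(A⊗A)m* = δ² A`, i.e. `A` is a
quantum adjacency operator. Here `mstar` is the adjoint of the multiplication map with
respect to the GNS inner products. -/
theorem stmt2 {n m : ℕ} (ρ : Matrix (Fin n) (Fin n) ℂ) (hρ : ρ.PosDef)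
    (δ : ℝ) (hδ : 0 < δ) (hform : (ρ⁻¹).trace = (δ ^ 2 : ℂ))
    (V : Fin m → Matrix (Fin n) (Fin n) ℂ)
    (horth : ∀ r q, (ρ⁻¹ * (V r)ᴴ * V q).trace = if r = q then (δ ^ 2 : ℂ) else 0)
    (mstar : Matrix (Fin n) (Fin n) ℂ →ₗ[ℂ]
      Matrix (Fin n) (Fin n) ℂ ⊗[ℂ] Matrix (Fin n) (Fin n) ℂ)
    (hmstar : ∀ x y z : Matrix (Fin n) (Fin n) ℂ,
      psi1 ρ (star (x * y) * z) = pair1 ρ x y (mstar z)) :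
    ∀ z : Matrix (Fin n) (Fin n) ℂ,
      LinearMap.mul' ℂ (Matrix (Fin n) (Fin n) ℂ)
          (TensorProduct.map (krausMap V) (krausMap V) (mstar z)) =
        (δ ^ 2 : ℂ) • krausMap V z := by
  intro z
  have hT : mstar z = ∑ i, ∑ j, ∑ k,
      z i j • ((Matrix.single i k 1 * ρ⁻¹) ⊗ₜ[ℂ] Matrix.single k j 1) := by
    apply ((Matrix.stdBasis ℂ (Fin n) (Fin n)).tensorProduct
      (Matrix.stdBasis ℂ (Fin n) (Fin n))).repr.injective
    ext ⟨⟨a, b⟩, ⟨c, d⟩⟩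
    rw [← Module.Basis.coord_apply, ← Module.Basis.coord_apply, ← coord_eq ρ hρ a b c d,
      ← hmstar, pairT ρ hρ]
  rw [hT]
  simp only [map_sum, _root_.map_smul, TensorProduct.map_tmul, LinearMap.mul'_apply]
  have inner : ∀ i j : Fin n, ∑ k, krausMap V (Matrix.single i k 1 * ρ⁻¹) *
      krausMap V (Matrix.single k j 1) = (δ ^ 2 : ℂ) • krausMap V (Matrix.single i j 1) := by
    intro i j
    simp only [krausMap, LinearMap.coe_mk, AddHom.coe_mk]
    have e1 : ∀ k, (∑ r, V r * (Matrix.single i k 1 * ρ⁻¹) * (V r)ᴴ) *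
        (∑ q, V q * Matrix.single k j 1 * (V q)ᴴ) =
        ∑ r, ∑ q, V r * ((Matrix.single i k 1 * (ρ⁻¹ * (V r)ᴴ * V q) * Matrix.single k j 1) *
          (V q)ᴴ) := by
      intro k
      rw [Finset.sum_mul_sum]
      apply Finset.sum_congr rfl; intro r _
      apply Finset.sum_congr rfl; intro q _
      simp only [mul_assoc]
    rw [Finset.sum_congr rfl (fun k _ => e1 k), Finset.sum_comm]
    rw [Finset.sum_congr rfl (fun r (_ : r ∈ Finset.univ) => Finset.sum_comm (γ := Fin n))]
    have e2 : ∀ r q, ∑ k, V r *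
        ((Matrix.single i k 1 * (ρ⁻¹ * (V r)ᴴ * V q) * Matrix.single k j 1) * (V q)ᴴ)
        = (if r = q then (δ ^ 2 : ℂ) else 0) • (V r * (Matrix.single i j 1 * (V q)ᴴ)) := by
      intro r q
      rw [← Finset.mul_sum, ← Finset.sum_mul, sumk, horth]
      rw [smul_mul_assoc, mul_smul_comm]
    rw [Finset.sum_congr rfl (fun r _ => Finset.sum_congr rfl (fun q _ => e2 r q))]
    simp only [ite_smul, zero_smul, Finset.sum_ite_eq, Finset.mem_univ, if_true]
    rw [Finset.smul_sum]
    apply Finset.sum_congr rfl; intro r _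
    rw [mul_assoc]
  rw [Finset.sum_congr rfl (fun i (_ : i ∈ Finset.univ) => Finset.sum_congr rfl
    (fun j _ => by rw [← Finset.smul_sum, inner i j]))]
  have hz1 : z = ∑ i, ∑ j, z i j • Matrix.single i j (1:ℂ) := by
    ext a b
    simp [Matrix.sum_apply, Matrix.single, ite_and, Finset.sum_ite_eq,
      Finset.sum_ite_eq']
  have hz : krausMap V z = ∑ i, ∑ j, z i j • krausMap V (Matrix.single i j 1) := by
    calc krausMap V z = krausMap V (∑ i, ∑ j, z i j • Matrix.single i j (1:ℂ)) := by
          rw [← hz1]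
      _ = _ := by simp only [map_sum, _root_.map_smul]
  rw [hz, Finset.smul_sum]
  apply Finset.sum_congr rfl; intro i _
  rw [Finset.smul_sum]
  apply Finset.sum_congr rfl; intro j _
  rw [smul_comm]
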